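/- For the modified hinge loss φ(z) = max{1−z, 0}^{1+Δ} with Δ > 0, the optimal generic conditional φ-risk is C*(η) = 2^{1+Δ}·η·(1−η) / (η^{1/Δ} + (1−η)^{1/Δ})^Δ for η ∈ (0,1). -/

import Mathlib

open Real

private lemma tangent_aux {p w t : ℝ} (hp : 1 ≤ p) (hw : 0 < w) (ht : 0 ≤ t) :
    w ^ p + p * w ^ (p - 1) * (t - w) ≤ t ^ p := by
  have hs : -1 ≤ t / w - 1 := by
    have : 0 ≤ t / w := div_nonneg ht hw.le
    linarith
  have h1 : 1 + p * (t / w - 1) ≤ (1 + (t / w - 1)) ^ p :=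
    one_add_mul_self_le_rpow_one_add hs hp
  have h2 : (1 + (t / w - 1)) ^ p = t ^ p / w ^ p := by
    rw [show 1 + (t / w - 1) = t / w by ring, Real.div_rpow ht hw.le]
  rw [h2] at h1
  have hW : 0 < w ^ p := Real.rpow_pos_of_pos hw p
  have h3 : w ^ (p - 1) = w ^ p / w := by
    rw [Real.rpow_sub hw, Real.rpow_one]
  have h4 := mul_le_mul_of_nonneg_right h1 hW.le
  rw [div_mul_cancel₀ _ hW.ne'] at h4
  rw [h3]
  have hww : t / w * w = t := div_mul_cancel₀ t hw.ne'
  calc w ^ p + p * (w ^ p / w) * (t - w)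
      = (1 + p * (t / w - 1)) * w ^ p := by
        field_simp
    _ ≤ t ^ p := h4

theorem stmt16 (Δ : ℝ) (hΔ : 0 < Δ) :
    ∀ η ∈ Set.Ioo (0:ℝ) 1,
      (⨅ z : ℝ,
          η * max (1 - z) 0 ^ (1 + Δ) + (1 - η) * max (1 - (-z)) 0 ^ (1 + Δ)) =
        2 ^ (1 + Δ) * η * (1 - η) / (η ^ (1 / Δ) + (1 - η) ^ (1 / Δ)) ^ Δ := by
  rintro η ⟨hη0, hη1⟩
  have hη1' : 0 < 1 - η := by linarith
  set p : ℝ := 1 + Δ with hp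
  have hp1 : (1:ℝ) ≤ p := by simp [hp]; linarith
  set a : ℝ := η ^ (1 / Δ) with ha_def
  set b : ℝ := (1 - η) ^ (1 / Δ) with hb_def
  have ha : 0 < a := Real.rpow_pos_of_pos hη0 _
  have hb : 0 < b := Real.rpow_pos_of_pos hη1' _
  set s : ℝ := a + b with hs_def
  have hs : 0 < s := by positivity
  have haΔ : a ^ Δ = η := by
    rw [ha_def, ← Real.rpow_mul hη0.le, one_div, inv_mul_cancel₀ hΔ.ne', Real.rpow_one]
  have hbΔ : b ^ Δ = 1 - η := by
    rw [hb_def, ← Real.rpow_mul hη1'.le, one_div, inv_mul_cancel₀ hΔ.ne', Real.rpow_one]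
  set u₀ : ℝ := 2 * b / s with hu₀_def
  set v₀ : ℝ := 2 * a / s with hv₀_def
  have hu₀ : 0 < u₀ := by positivity
  have hv₀ : 0 < v₀ := by positivity
  have huv₀ : u₀ + v₀ = 2 := by
    rw [hu₀_def, hv₀_def]; field_simp; ring
  have hsp : s ^ p = s ^ Δ * s := by
    rw [hp, add_comm, Real.rpow_add hs, Real.rpow_one]
  have hspΔ : 0 < s ^ Δ := Real.rpow_pos_of_pos hs Δ
  -- value at optimum
  have hu₀p : u₀ ^ p = 2 ^ p * (b * (1 - η)) / s ^ p := by
    rw [hu₀_def, Real.div_rpow (by positivity) hs.le,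
      Real.mul_rpow (by norm_num) hb.le]
    rw [hp, Real.rpow_add hb, Real.rpow_one, hbΔ]
  have hv₀p : v₀ ^ p = 2 ^ p * (a * η) / s ^ p := by
    rw [hv₀_def, Real.div_rpow (by positivity) hs.le,
      Real.mul_rpow (by norm_num) ha.le]
    rw [hp, Real.rpow_add ha, Real.rpow_one, haΔ]
  have hval : η * u₀ ^ p + (1 - η) * v₀ ^ p = 2 ^ p * η * (1 - η) / s ^ Δ := by
    rw [hu₀p, hv₀p, hsp]
    have h2p : (0:ℝ) < 2 ^ p := Real.rpow_pos_of_pos (by norm_num) p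
    field_simp
    ring
  -- the candidate minimum value
  set m : ℝ := 2 ^ p * η * (1 - η) / s ^ Δ with hm_def
  -- tangent-line coefficients
  have hu₀Δ : η * u₀ ^ (p - 1) = 2 ^ Δ * η * (1 - η) / s ^ Δ := by
    have : p - 1 = Δ := by rw [hp]; ring
    rw [this, hu₀_def, Real.div_rpow (by positivity) hs.le,
      Real.mul_rpow (by norm_num) hb.le, hbΔ]
    ring
  have hv₀Δ : (1 - η) * v₀ ^ (p - 1) = 2 ^ Δ * η * (1 - η) / s ^ Δ := by
    have : p - 1 = Δ := by rw [hp]; ring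
    rw [this, hv₀_def, Real.div_rpow (by positivity) hs.le,
      Real.mul_rpow (by norm_num) ha.le, haΔ]
    ring
  have hc : 0 < 2 ^ Δ * η * (1 - η) / s ^ Δ := by positivity
  -- lower bound for every z
  have hlow : ∀ z : ℝ,
      m ≤ η * max (1 - z) 0 ^ p + (1 - η) * max (1 - (-z)) 0 ^ p := by
    intro z
    set u : ℝ := max (1 - z) 0 with hu_def
    set v : ℝ := max (1 - (-z)) 0 with hv_def
    have hu : 0 ≤ u := le_max_right _ _
    have hv : 0 ≤ v := le_max_right _ _
    have huv : 2 ≤ u + v := by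
      have h1 : 1 - z ≤ u := le_max_left _ _
      have h2 : 1 - (-z) ≤ v := le_max_left _ _
      linarith
    have t1 : u₀ ^ p + p * u₀ ^ (p - 1) * (u - u₀) ≤ u ^ p :=
      tangent_aux hp1 hu₀ hu
    have t2 : v₀ ^ p + p * v₀ ^ (p - 1) * (v - v₀) ≤ v ^ p :=
      tangent_aux hp1 hv₀ hv
    have t1' := mul_le_mul_of_nonneg_left t1 hη0.le
    have t2' := mul_le_mul_of_nonneg_left t2 hη1'.le
    have key : η * u₀ ^ p + (1 - η) * v₀ ^ p
        + p * (2 ^ Δ * η * (1 - η) / s ^ Δ) * (u + v - 2)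
        ≤ η * u ^ p + (1 - η) * v ^ p := by
      have e1 : η * (u₀ ^ p + p * u₀ ^ (p - 1) * (u - u₀))
          = η * u₀ ^ p + p * (η * u₀ ^ (p - 1)) * (u - u₀) := by ring
      have e2 : (1 - η) * (v₀ ^ p + p * v₀ ^ (p - 1) * (v - v₀))
          = (1 - η) * v₀ ^ p + p * ((1 - η) * v₀ ^ (p - 1)) * (v - v₀) := by ring
      rw [e1, hu₀Δ] at t1'
      rw [e2, hv₀Δ] at t2'
      have := add_le_add t1' t2'
      calc η * u₀ ^ p + (1 - η) * v₀ ^ p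
          + p * (2 ^ Δ * η * (1 - η) / s ^ Δ) * (u + v - 2)
          = (η * u₀ ^ p + p * (2 ^ Δ * η * (1 - η) / s ^ Δ) * (u - u₀))
            + ((1 - η) * v₀ ^ p + p * (2 ^ Δ * η * (1 - η) / s ^ Δ) * (v - v₀)) := by
            rw [show (2:ℝ) = u₀ + v₀ from huv₀.symm]; ring
        _ ≤ η * u ^ p + (1 - η) * v ^ p := this
    have hnn : 0 ≤ p * (2 ^ Δ * η * (1 - η) / s ^ Δ) * (u + v - 2) := by
      apply mul_nonneg (mul_nonneg (by linarith) hc.le) (by linarith)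
    calc m = η * u₀ ^ p + (1 - η) * v₀ ^ p := hval.symm
      _ ≤ η * u₀ ^ p + (1 - η) * v₀ ^ p
          + p * (2 ^ Δ * η * (1 - η) / s ^ Δ) * (u + v - 2) := by linarith
      _ ≤ η * u ^ p + (1 - η) * v ^ p := key
  have hbdd : BddBelow (Set.range fun z : ℝ =>
      η * max (1 - z) 0 ^ p + (1 - η) * max (1 - (-z)) 0 ^ p) := by
    refine ⟨m, ?_⟩
    rintro x ⟨z, rfl⟩
    exact hlow z
  apply le_antisymm
  · -- iInf ≤ value at z₀ = 1 - u₀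
    have h1 : 1 - (1 - u₀) = u₀ := by ring
    have h2 : 1 - (-(1 - u₀)) = v₀ := by linarith [huv₀]
    calc (⨅ z : ℝ, η * max (1 - z) 0 ^ p + (1 - η) * max (1 - (-z)) 0 ^ p)
        ≤ η * max (1 - (1 - u₀)) 0 ^ p + (1 - η) * max (1 - (-(1 - u₀))) 0 ^ p :=
          ciInf_le hbdd (1 - u₀)
      _ = 2 ^ p * η * (1 - η) / s ^ Δ := by
          rw [h1, h2, max_eq_left hu₀.le, max_eq_left hv₀.le, hval]
  · exact le_ciInf hlow
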